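/- arXiv:2105.14903 — 3 statements merged into one kernel-verified Lean document; each statement's English description precedes it below -/
import Mathlib

section
/- Fix integers n ≥ 82 of the form n = 3^ℓ - 1 with ℓ ≥ 4, and fix k ≥ 1. Let Q' : ℕ → ℚ satisfy Q' i ≥ 3 * Q' (i-1) + 3^(i-1) * ((N_{i-1}*k - 2*k)/3 + 1) * (M_{i-1}*k + 1) for 2 ≤ i ≤ ℓ, where M_j = 3^j - 1 and N_j = (n+1)/3^j - 1, and Q' 1 ≥ 0. Then for all 2 ≤ i ≤ ℓ, Q' i > 3^(i-3) * k^2 * ((i-1)*n - 3^i / 2). -/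
set_option maxHeartbeats 2000000 in
theorem stmt_6 (ℓ n k : ℕ) (hℓ : 4 ≤ ℓ) (hn : n = 3 ^ ℓ - 1) (hn82 : 82 ≤ n)
    (hk : 1 ≤ k) (Q' : ℕ → ℚ) (hQ1 : 0 ≤ Q' 1)
    (hrec : ∀ i, 2 ≤ i → i ≤ ℓ →
      Q' i ≥ 3 * Q' (i - 1) +
        3 ^ (i - 1) *
          (((((n : ℚ) + 1) / 3 ^ (i - 1) - 1) * k - 2 * k) / 3 + 1) *
          (((3 : ℚ) ^ (i - 1) - 1) * k + 1)) :
    ∀ i, 2 ≤ i → i ≤ ℓ →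
      Q' i > (3 : ℚ) ^ ((i : ℤ) - 3) * (k : ℚ) ^ 2 *
        (((i : ℚ) - 1) * n - (3 : ℚ) ^ i / 2) := by
  have hpow1 : 1 ≤ 3 ^ ℓ := Nat.one_le_pow _ _ (by norm_num)
  have h3l : (3 : ℚ) ^ ℓ = (n : ℚ) + 1 := by
    have : (n : ℚ) = ((3 ^ ℓ - 1 : ℕ) : ℚ) := by exact_mod_cast congrArg (Nat.cast (R := ℚ)) hn
    rw [Nat.cast_sub hpow1] at this
    push_cast at this
    linarith
  have hK1 : (1 : ℚ) ≤ (k : ℚ) := by exact_mod_cast hk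
  have hK0 : (0 : ℚ) ≤ (k : ℚ) := by linarith
  have hN82 : (82 : ℚ) ≤ (n : ℚ) := by exact_mod_cast hn82
  have hN0 : (0 : ℚ) ≤ (n : ℚ) := by linarith
  -- expanded form of Q' 2 lower bound
  have hT2 : Q' 2 ≥ (((n : ℚ) + 1) * k / 3 - 3 * k + 3) * (2 * k + 1) := by
    have h2 := hrec 2 (by norm_num) (by omega)
    norm_num at h2
    linarith [h2, hQ1]
  -- invariant: V i = 3^i/27 * k^2 * (i*n + 1 - 3*3^i/2), for 3 ≤ i ≤ ℓ
  have key : ∀ i, 3 ≤ i → i ≤ ℓ →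
      Q' i > (3 : ℚ) ^ i / 27 * (k : ℚ) ^ 2 *
        ((i : ℚ) * (n : ℚ) + 1 - 3 * (3 : ℚ) ^ i / 2) := by
    intro i hi3
    induction i, hi3 using Nat.le_induction with
    | base =>
      intro h3ℓ
      have h3 := hrec 3 (by norm_num) (by omega)
      norm_num at h3
      have hT3 : Q' 3 ≥ 3 * Q' 2 + (((n : ℚ) + 1) * k / 3 - 9 * k + 9) * (8 * k + 1) := by
        linarith [h3]
      norm_num
      nlinarith [hT2, hT3, mul_nonneg (sub_nonneg.2 hN82) (sq_nonneg (k : ℚ)),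
        mul_nonneg hN0 hK0, sq_nonneg (k : ℚ), hK0, hK1]
    | succ i hi3 IH =>
      intro hiℓ
      have hV := IH (by omega)
      have h := hrec (i + 1) (by omega) hiℓ
      simp only [Nat.add_sub_cancel] at h
      have ha27 : (27 : ℚ) ≤ (3 : ℚ) ^ i := by
        calc (27 : ℚ) = 3 ^ 3 := by norm_num
        _ ≤ (3 : ℚ) ^ i := pow_le_pow_right₀ (by norm_num) hi3
      have ha0 : (0 : ℚ) < (3 : ℚ) ^ i := by positivity
      have h3as : 3 * (3 : ℚ) ^ i ≤ (n : ℚ) + 1 := by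
        have : (3 : ℚ) ^ (i + 1) ≤ (3 : ℚ) ^ ℓ := pow_le_pow_right₀ (by norm_num) hiℓ
        rw [h3l, pow_succ] at this
        linarith
      set a : ℚ := (3 : ℚ) ^ i with ha
      have eT : a * ((((n : ℚ) + 1) / a - 1) * (k : ℚ) - 2 * k) / 3 + a
          = (((n : ℚ) + 1 - 3 * a) * k / 3 + a) := by
        field_simp
        ring
      have hT : a * ((((n : ℚ) + 1) / a - 1) * (k : ℚ) - 2 * (k : ℚ)) / 3 + a
          = a * (((((n : ℚ) + 1) / a - 1) * (k : ℚ) - 2 * (k : ℚ)) / 3 + 1) := by ring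
      have hgad : a * (((((n : ℚ) + 1) / a - 1) * (k : ℚ) - 2 * (k : ℚ)) / 3 + 1) *
          ((a - 1) * (k : ℚ) + 1)
          = ((((n : ℚ) + 1 - 3 * a) * k / 3 + a)) * ((a - 1) * (k : ℚ) + 1) := by
        rw [← hT, eT]
      rw [hgad] at h
      -- step inequality
      have hu : (0 : ℚ) ≤ (n : ℚ) + 1 - 3 * a := by linarith
      have hstep : ((((n : ℚ) + 1 - 3 * a) * k / 3 + a)) * ((a - 1) * (k : ℚ) + 1)
          ≥ a / 9 * (k : ℚ) ^ 2 * ((n : ℚ) - 3 * a) := by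
        have h1 : (0 : ℚ) ≤ ((n : ℚ) + 1 - 3 * a) * (2 * a - 3) * (k : ℚ) ^ 2 := by
          have : (0 : ℚ) ≤ 2 * a - 3 := by linarith
          positivity
        have h2 : (0 : ℚ) ≤ ((n : ℚ) + 1 - 3 * a) * (k : ℚ) := by positivity
        have h3 : (0 : ℚ) ≤ a * (a - 1) * (k : ℚ) := by
          have : (0 : ℚ) ≤ a - 1 := by linarith
          positivity
        nlinarith [h1, h2, h3, ha0]
      have hpowsucc : (3 : ℚ) ^ (i + 1) = 3 * a := by rw [ha, pow_succ]; ring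
      have hcast : ((i + 1 : ℕ) : ℚ) = (i : ℚ) + 1 := by push_cast; ring
      rw [hpowsucc, hcast]
      -- target = 3 * V(i) + a/9 * k^2 * (n - 3a)  (ring identity)
      linarith [hV, h, hstep]
  intro i hi2 hiℓ
  have hzpow : (3 : ℚ) ^ ((i : ℤ) - 3) = (3 : ℚ) ^ i / 27 := by
    rw [zpow_sub₀ (by norm_num : (3 : ℚ) ≠ 0)]
    norm_num
  rw [hzpow]
  rcases Nat.lt_or_ge i 3 with hi | hi
  · -- i = 2
    have hi2' : i = 2 := by omega
    subst hi2'
    have hgoal : (3 : ℚ) ^ (2:ℕ) / 27 * (k : ℚ) ^ 2 *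
        ((((2:ℕ) : ℚ) - 1) * n - (3 : ℚ) ^ (2:ℕ) / 2)
        = 1 / 3 * (k : ℚ) ^ 2 * ((n : ℚ) - 9 / 2) := by
      push_cast
      ring
    rw [hgoal]
    nlinarith [hT2, mul_nonneg (sub_nonneg.2 hN82) (sq_nonneg (k : ℚ)),
      mul_nonneg hN0 hK0, sq_nonneg (k : ℚ), hK0, hK1]
  · -- i ≥ 3
    have hkey := key i hi hiℓ
    have hE : (3 : ℚ) ^ i ≤ (n : ℚ) + 1 := by
      have : (3 : ℚ) ^ i ≤ (3 : ℚ) ^ ℓ := pow_le_pow_right₀ (by norm_num) hiℓ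
      rw [h3l] at this
      linarith
    have hpos : (0 : ℚ) ≤ (3 : ℚ) ^ i / 27 := by positivity
    have hEE : (0 : ℚ) ≤ (3 : ℚ) ^ i / 27 * (k : ℚ) ^ 2 * ((n : ℚ) + 1 - (3 : ℚ) ^ i) := by
      have : (0 : ℚ) ≤ (n : ℚ) + 1 - (3 : ℚ) ^ i := by linarith
      positivity
    nlinarith [hkey, hEE]
end

section
/- For all i ≥ 2 and n of the form 3^ℓ - 1 with i ≤ ℓ: 3^(i-1)*((N*k - 2k)/3 + 1)*(M*k + 1) > 3^(i-3) * k^2 * (n - 3^i), where M = 3^(i-1) - 1, N = (n+1)/3^(i-1) - 1, and k ≥ 1 is an integer. -/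
theorem stmt_7 (i ℓ n k : ℕ) (hi : 2 ≤ i) (hiℓ : i ≤ ℓ) (hn : n = 3 ^ ℓ - 1)
    (hk : 1 ≤ k) :
    (3 : ℚ) ^ (i - 1) *
        (((((n : ℚ) + 1) / 3 ^ (i - 1) - 1) * k - 2 * k) / 3 + 1) *
        (((3 : ℚ) ^ (i - 1) - 1) * k + 1) >
      (3 : ℚ) ^ ((i : ℤ) - 3) * (k : ℚ) ^ 2 * ((n : ℚ) - 3 ^ i) := by
  obtain ⟨j, rfl⟩ : ∃ j, i = j + 2 := ⟨i - 2, by omega⟩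
  obtain ⟨m, rfl⟩ : ∃ m, ℓ = (j + 1) + (m + 1) := ⟨ℓ - j - 2, by omega⟩
  subst hn
  have hcast : ((3 ^ ((j+1)+(m+1)) - 1 : ℕ) : ℚ) = 3 ^ (j+1) * 3 ^ (m+1) - 1 := by
    have h1 : 1 ≤ 3 ^ ((j+1)+(m+1)) := Nat.one_le_pow _ _ (by norm_num)
    push_cast [h1]
    ring
  have hsub : j + 2 - 1 = j + 1 := by omega
  have hz : ((j + 2 : ℕ) : ℤ) - 3 = (j : ℤ) - 1 := by push_cast; ring
  have hzp : (3 : ℚ) ^ ((j : ℤ) - 1) = 3 ^ j / 3 := by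
    rw [zpow_sub₀ (by norm_num : (3:ℚ) ≠ 0), zpow_natCast, zpow_one]
  rw [hsub, hcast, hz, hzp]
  set x : ℚ := 3 ^ (j+1) with hxdef
  set y : ℚ := 3 ^ (m+1) with hydef
  have hx3 : 3 ≤ x := by
    calc (3:ℚ) = 3 ^ 1 := by norm_num
    _ ≤ 3 ^ (j+1) := by apply pow_le_pow_right₀ (by norm_num); omega
  have hy3 : 3 ≤ y := by
    calc (3:ℚ) = 3 ^ 1 := by norm_num
    _ ≤ 3 ^ (m+1) := by apply pow_le_pow_right₀ (by norm_num); omega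
  have hxj : x = 3 * 3 ^ j := by rw [hxdef]; ring
  have hx32 : (3:ℚ) ^ (j + 2) = 3 * x := by rw [hxdef]; ring
  have hk1 : (1 : ℚ) ≤ (k : ℚ) := by exact_mod_cast hk
  have hx0 : x ≠ 0 := by positivity
  rw [hx32]
  have hdiv : (x * y - 1 + 1) / x = y := by field_simp; ring
  rw [hdiv]
  have h3j : (3:ℚ) ^ j = x / 3 := by rw [hxj]; ring
  rw [h3j]
  have hk0 : (0:ℚ) ≤ (k:ℚ) := by positivity
  nlinarith [mul_nonneg (mul_nonneg (mul_nonneg (by linarith : (0:ℚ) ≤ x) (by linarith : (0:ℚ) ≤ x - 3)) (by linarith : (0:ℚ) ≤ y - 3)) (sq_nonneg (k:ℚ)),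
    mul_nonneg (mul_nonneg (by linarith : (0:ℚ) ≤ x) (by linarith : (0:ℚ) ≤ y - 3)) (sq_nonneg (k:ℚ)),
    mul_le_mul_of_nonneg_left (mul_le_mul hk1 hk1 (by norm_num) hk0 : (1:ℚ)*1 ≤ k*k) (by linarith : (0:ℚ) ≤ x),
    mul_nonneg (mul_nonneg (by linarith : (0:ℚ) ≤ x) (by linarith : (0:ℚ) ≤ y)) hk0,
    mul_nonneg (mul_nonneg (by linarith : (0:ℚ) ≤ x) (by linarith : (0:ℚ) ≤ x)) hk0,
    mul_nonneg (by linarith : (0:ℚ) ≤ x) hk0]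
end

section
/- Fix ℓ ≥ 1, let k ≥ 2, and consider any binary array A of dimensions (a·k) × (b·k) such that row x consists entirely of 0s if and only if k divides x+1 (rows indexed from 0), and such that every other row contains at least one 1 in every window of k consecutive cells. Then for any subarray R = A[x₁..x₂][y₁..y₂] with x₂ - x₁ + 1 ≥ k and y₂ - y₁ + 1 ≥ k, the value x₁ mod k is determined by the contents of R alone: it is recoverable as the unique residue consistent with the positions of the all-zero rows of R. -/
theorem stmt_19 (ℓ : ℕ) (hℓ : 1 ≤ ℓ) (k a b a' b' : ℕ) (hk : 2 ≤ k)
    (ha : 1 ≤ a) (hb : 1 ≤ b) (ha' : 1 ≤ a') (hb' : 1 ≤ b')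
    (A A' : ℕ → ℕ → Bool)
    -- row `x` of `A` is all zeros iff `k ∣ x + 1`
    (hzero : ∀ x, x < a * k → ((∀ y, y < b * k → A x y = false) ↔ k ∣ (x + 1)))
    -- every other row of `A` has a 1 in every window of `k` consecutive cells
    (hone : ∀ x, x < a * k → ¬ k ∣ (x + 1) →
      ∀ y, y + k ≤ b * k → ∃ y', y ≤ y' ∧ y' < y + k ∧ A x y' = true)
    (hzero' : ∀ x, x < a' * k → ((∀ y, y < b' * k → A' x y = false) ↔ k ∣ (x + 1)))
    (hone' : ∀ x, x < a' * k → ¬ k ∣ (x + 1) →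
      ∀ y, y + k ≤ b' * k → ∃ y', y ≤ y' ∧ y' < y + k ∧ A' x y' = true) :
    -- any two equal subarrays of height ≥ k and width ≥ k have the same
    -- top-row index modulo k: the contents of the subarray determine `x₁ % k`
    ∀ x₁ x₂ y₁ y₂ x₁' x₂' y₁' y₂' : ℕ,
      x₁ ≤ x₂ → x₂ < a * k → y₁ ≤ y₂ → y₂ < b * k → k ≤ x₂ - x₁ + 1 → k ≤ y₂ - y₁ + 1 →
      x₁' ≤ x₂' → x₂' < a' * k → y₁' ≤ y₂' → y₂' < b' * k →
      x₂ - x₁ = x₂' - x₁' → y₂ - y₁ = y₂' - y₁' →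
      (∀ dx dy, dx ≤ x₂ - x₁ → dy ≤ y₂ - y₁ → A (x₁ + dx) (y₁ + dy) = A' (x₁' + dx) (y₁' + dy)) →
      x₁ % k = x₁' % k := by
  intro x₁ x₂ y₁ y₂ x₁' x₂' y₁' y₂' hx12 hx2 hy12 hy2 hkh hkw hx12' hx2' hy12' hy2' hdx hdy heq
  have hkpos : 0 < k := by omega
  have hm : x₁ % k < k := Nat.mod_lt _ hkpos
  set d : ℕ := k - 1 - x₁ % k with hd
  have hdle : d ≤ x₂ - x₁ := by omega
  have hdiv : k ∣ x₁ + d + 1 := by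
    have h := Nat.div_add_mod x₁ k
    refine ⟨x₁ / k + 1, ?_⟩
    rw [Nat.mul_succ]
    omega
  -- row x₁ + d of A is all zero
  have hrow : ∀ y, y < b * k → A (x₁ + d) y = false :=
    (hzero (x₁ + d) (by omega)).mpr hdiv
  -- hence k ∣ x₁' + d + 1
  have hdiv' : k ∣ x₁' + d + 1 := by
    by_contra hnd
    obtain ⟨y', hy'1, hy'2, hy'3⟩ := hone' (x₁' + d) (by omega) hnd y₁' (by omega)
    have hdy' : y' - y₁' ≤ y₂ - y₁ := by omega
    have := heq d (y' - y₁') hdle hdy'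
    rw [show y₁' + (y' - y₁') = y' from by omega] at this
    have hz := hrow (y₁ + (y' - y₁')) (by omega)
    rw [hz] at this
    rw [hy'3] at this
    exact Bool.false_ne_true this
  have h1 : (x₁ + (d + 1)) % k = 0 := by
    obtain ⟨q, hq⟩ := hdiv
    rw [show x₁ + (d + 1) = x₁ + d + 1 by ring, hq, Nat.mul_mod_right]
  have h2 : (x₁' + (d + 1)) % k = 0 := by
    obtain ⟨q, hq⟩ := hdiv'
    rw [show x₁' + (d + 1) = x₁' + d + 1 by ring, hq, Nat.mul_mod_right]
  exact Nat.ModEq.add_right_cancel' (d + 1) (h1.trans h2.symm)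
end
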